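/- Let H be a multigraph on vertex set V with degree sequence x, and let S ⊆ V with deg_H(S) even. If H is drawn from the configuration model on degree sequence x, then the probability that there are no edges between S and its complement is at most binom(m, deg_H(S)/2)^(-1), where 2m = ∑_i x_i. -/

import Mathlib

open scoped Classical

/-- A perfect matching on the set of half-edges: a fixed-point-free involution. -/
def IsPairing {H : Type*} (f : H → H) : Prop :=
  Function.Involutive f ∧ ∀ x, f x ≠ x

def pcount : ℕ → ℕ
  | 0 => 1
  | n+1 => (2*n+1) * pcount n

lemma pcount_pos (n : ℕ) : 0 < pcount n := by
  induction n with
  | zero => simp [pcount]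
  | succ n ih => rw [pcount]; positivity

lemma pcount_mul (n : ℕ) : 2^n * n.factorial * pcount n = (2*n).factorial := by
  induction n with
  | zero => simp [pcount]
  | succ n ih =>
      rw [pcount]
      have h1 : 2*(n+1) = 2*n+1+1 := by ring
      rw [h1, Nat.factorial_succ (2*n+1), Nat.factorial_succ (2*n), ← ih,
        Nat.factorial_succ n]
      ring

/-- restriction of a pairing to an invariant subset -/
def restrictP {α : Type*} (f : α → α) (P : α → Prop)
    (hP : ∀ x, P x → P (f x)) : {x // P x} → {x // P x} :=
  fun x => ⟨f x.1, hP _ x.2⟩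

lemma restrictP_isPairing {α : Type*} (f : α → α) (hf : IsPairing f) (P : α → Prop)
    (hP : ∀ x, P x → P (f x)) : IsPairing (restrictP f P hP) := by
  constructor
  · intro x; exact Subtype.ext (hf.1 x.1)
  · intro x hx
    exact hf.2 x.1 (congrArg Subtype.val hx)

section Glue1

variable {α : Type*} (x₀ y : α)

noncomputable def glue1 (g : {z : α // z ≠ x₀ ∧ z ≠ y} → {z : α // z ≠ x₀ ∧ z ≠ y}) : α → α :=
  fun z => if z = x₀ then y else if z = y then x₀ else
    if hz : z ≠ x₀ ∧ z ≠ y then (g ⟨z, hz⟩).1 else z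

lemma glue1_isPairing (hy : y ≠ x₀)
    {g : {z : α // z ≠ x₀ ∧ z ≠ y} → {z : α // z ≠ x₀ ∧ z ≠ y}}
    (hg : IsPairing g) : IsPairing (glue1 x₀ y g) := by
  constructor
  · intro z
    by_cases h1 : z = x₀
    · subst h1; simp [glue1, hy, hy.symm]
    · by_cases h2 : z = y
      · subst h2; simp [glue1, h1]
      · have hz : z ≠ x₀ ∧ z ≠ y := ⟨h1, h2⟩
        have e1 : glue1 x₀ y g z = (g ⟨z, hz⟩).1 := by
          simp only [glue1, if_neg h1, if_neg h2, dif_pos hz]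
        have hg1 := (g ⟨z, hz⟩).2.1
        have hg2 := (g ⟨z, hz⟩).2.2
        rw [e1]
        have e2 : glue1 x₀ y g (g ⟨z, hz⟩).1 = (g (g ⟨z, hz⟩)).1 := by
          simp only [glue1, if_neg hg1, if_neg hg2, dif_pos (And.intro hg1 hg2)]
        rw [e2, hg.1 ⟨z, hz⟩]
  · intro z
    by_cases h1 : z = x₀
    · subst h1; simpa [glue1] using hy
    · by_cases h2 : z = y
      · subst h2; simpa [glue1, h1] using fun h => h1 h.symm
      · have hz : z ≠ x₀ ∧ z ≠ y := ⟨h1, h2⟩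
        simp only [glue1, if_neg h1, if_neg h2, dif_pos hz]
        intro hcon
        exact hg.2 ⟨z, hz⟩ (Subtype.ext hcon)

end Glue1

lemma card_pairing : ∀ (n : ℕ) (α : Type u) [Finite α], Nat.card α = 2*n →
    Nat.card {f : α → α // IsPairing f} = pcount n := by
  intro n
  induction n with
  | zero =>
      intro α hfin h
      have he : IsEmpty α := by
        rcases Nat.card_eq_zero.mp (show Nat.card α = 0 by omega) with h' | h'
        · exact h'
        · exact absurd hfin h'.not_finite
      rw [pcount, Nat.card_eq_one_iff_unique]
      refine ⟨⟨?_⟩, ⟨⟨fun x => x, ⟨fun x => rfl, fun x => (he.false x).elim⟩⟩⟩⟩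
      rintro ⟨f, _⟩ ⟨g, _⟩
      exact Subtype.ext (funext fun x => (he.false x).elim)
  | succ n ih =>
      intro α hfin h
      have hpos : 0 < Nat.card α := by omega
      obtain ⟨x₀⟩ := (Nat.card_pos_iff.mp hpos).1
      have E : (Σ y : {y : α // y ≠ x₀},
          {f : {z : α // z ≠ x₀ ∧ z ≠ y.1} → {z : α // z ≠ x₀ ∧ z ≠ y.1} // IsPairing f})
          ≃ {f : α → α // IsPairing f} := by
        refine Equiv.ofBijective
          (fun p => ⟨glue1 x₀ p.1.1 p.2.1, glue1_isPairing x₀ p.1.1 p.1.2 p.2.2⟩) ⟨?_, ?_⟩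
        · rintro ⟨⟨y, hy⟩, ⟨g, hg⟩⟩ ⟨⟨y', hy'⟩, ⟨g', hg'⟩⟩ heq
          have heq' : glue1 x₀ y g = glue1 x₀ y' g' := congrArg Subtype.val heq
          have hyy : y = y' := by
            have := congrFun heq' x₀
            simpa [glue1] using this
          subst hyy
          have hgg : g = g' := by
            funext z
            obtain ⟨z, hz1, hz2⟩ := z
            have := congrFun heq' z
            simp only [glue1, if_neg hz1, if_neg hz2, dif_pos (And.intro hz1 hz2)] at this
            exact Subtype.ext this
          subst hgg
          rfl
        · rintro ⟨f, hf⟩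
          have hmapsto : ∀ z : α, (z ≠ x₀ ∧ z ≠ f x₀) → (f z ≠ x₀ ∧ f z ≠ f x₀) := by
            rintro z ⟨hz1, hz2⟩
            constructor
            · intro hfz
              exact hz2 (by rw [← hfz, hf.1 z])
            · intro hfz
              exact hz1 (by rw [← hf.1 z, hfz, hf.1 x₀])
          refine ⟨⟨⟨f x₀, hf.2 x₀⟩, ⟨restrictP f _ hmapsto, restrictP_isPairing f hf _ hmapsto⟩⟩, ?_⟩
          apply Subtype.ext
          funext z
          by_cases h1 : z = x₀
          · subst h1; simp [glue1]
          · by_cases h2 : z = f x₀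
            · subst h2; simp [glue1, h1, hf.1 x₀]
            · simp only [glue1, if_neg h1, if_neg h2, dif_pos (And.intro h1 h2)]
              rfl
      have hfib : ∀ y : {y : α // y ≠ x₀},
          {f : {z : α // z ≠ x₀ ∧ z ≠ y.1} → {z : α // z ≠ x₀ ∧ z ≠ y.1} // IsPairing f}
            ≃ Fin (pcount n) := by
        intro y
        apply Finite.equivFinOfCardEq
        apply ih
        have : Nat.card {z : α // z ≠ x₀ ∧ z ≠ y.1} = Nat.card α - 2 := by
          have := Fintype.ofFinite α
          rw [Nat.card_eq_fintype_card, Nat.card_eq_fintype_card, Fintype.card_subtype]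
          have hsub : (Finset.univ.filter fun z : α => z ≠ x₀ ∧ z ≠ y.1)
              = Finset.univ \ {x₀, y.1} := by
            ext z; simp [Finset.mem_sdiff]
          rw [hsub, Finset.card_sdiff_of_subset (Finset.subset_univ _)]
          have h2 : ({x₀, y.1} : Finset α).card = 2 := by
            rw [Finset.card_insert_of_notMem (by simpa using (Ne.symm y.2)),
              Finset.card_singleton]
          rw [h2, Finset.card_univ]
        rw [this, h]
        omega
      have := Nat.card_congr (E.symm.trans (Equiv.sigmaEquivProdOfEquiv hfib))
      rw [this, Nat.card_prod, Nat.card_eq_fintype_card (α := Fin (pcount n)), Fintype.card_fin]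
      have hy : Nat.card {y : α // y ≠ x₀} = 2*n+1 := by
        have := Fintype.ofFinite α
        rw [Nat.card_eq_fintype_card, Fintype.card_subtype]
        have hsub : (Finset.univ.filter fun z : α => z ≠ x₀) = Finset.univ \ {x₀} := by
          ext z; simp
        rw [hsub, Finset.card_sdiff_of_subset (Finset.subset_univ _), Finset.card_singleton,
          Finset.card_univ]
        rw [Nat.card_eq_fintype_card] at h
        omega
      rw [hy, pcount]

lemma choose_sq_le (m k : ℕ) : m.choose k * m.choose k ≤ (2*m).choose (2*k) := by
  have h := Nat.add_choose_eq m m (2*k)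
  rw [two_mul m, h]
  have hmem : ((k, k) : ℕ × ℕ) ∈ Finset.HasAntidiagonal.antidiagonal (2*k) := by
    simp [two_mul]
  exact Finset.single_le_sum (f := fun p : ℕ × ℕ => m.choose p.1 * m.choose p.2)
    (fun _ _ => Nat.zero_le _) hmem

lemma key_nat (m k : ℕ) (hk : k ≤ m) :
    m.choose k * (pcount k * pcount (m-k)) ≤ pcount m := by
  have hF : 0 < 2^m * (k.factorial * ((m-k).factorial * m.factorial)) := by positivity
  apply Nat.le_of_mul_le_mul_left _ hF
  have e1 : 2 ^ m * (k.factorial * ((m - k).factorial * m.factorial)) *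
      (m.choose k * (pcount k * pcount (m - k)))
      = (2^k * k.factorial * pcount k) * (2^(m-k) * (m-k).factorial * pcount (m-k))
        * (m.choose k * m.factorial) := by
    have hp : (2:ℕ)^m = 2^k * 2^(m-k) := by
      rw [← pow_add, Nat.add_sub_cancel' hk]
    rw [hp]; ring
  have e2 : 2 ^ m * (k.factorial * ((m - k).factorial * m.factorial)) * pcount m
      = k.factorial * (m-k).factorial * ((2^m * m.factorial * pcount m)) := by ring
  rw [e1, e2, pcount_mul, pcount_mul, pcount_mul]
  have hmk : m.choose k * m.factorial = m.choose k * m.choose k * (k.factorial * (m-k).factorial) := by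
    rw [← Nat.choose_mul_factorial_mul_factorial hk]
    ring
  rw [hmk]
  have h2m : 2*(m-k) = 2*m - 2*k := by omega
  have hfact : (2*m).factorial = (2*m).choose (2*k) * ((2*k).factorial * (2*m-2*k).factorial) := by
    rw [← Nat.choose_mul_factorial_mul_factorial (by omega : 2*k ≤ 2*m)]
    ring
  rw [h2m, hfact]
  have := choose_sq_le m k
  calc (2 * k).factorial * (2 * m - 2*k).factorial * (m.choose k * m.choose k * (k.factorial * (m - k).factorial))
      = (m.choose k * m.choose k) * ((2*k).factorial * (2*m-2*k).factorial) * (k.factorial * (m-k).factorial) := by ring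
    _ ≤ ((2*m).choose (2*k)) * ((2*k).factorial * (2*m-2*k).factorial) * (k.factorial * (m-k).factorial) := by
        exact Nat.mul_le_mul_right _ (Nat.mul_le_mul_right _ this)
    _ = k.factorial * (m - k).factorial * ((2 * m).choose (2 * k) * ((2 * k).factorial * (2 * m - 2 * k).factorial)) := by ring

section Glue2

variable {V H : Type*} (att : H → V) (S : Finset V)

noncomputable def glue2
    (g : {x : H // att x ∈ S} → {x : H // att x ∈ S})
    (h : {x : H // att x ∉ S} → {x : H // att x ∉ S}) : H → H :=
  fun x => if hx : att x ∈ S then (g ⟨x, hx⟩).1 else (h ⟨x, hx⟩).1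

lemma glue2_isPairing
    {g : {x : H // att x ∈ S} → {x : H // att x ∈ S}}
    {h : {x : H // att x ∉ S} → {x : H // att x ∉ S}}
    (hg : IsPairing g) (hh : IsPairing h) : IsPairing (glue2 att S g h) := by
  constructor
  · intro x
    by_cases hx : att x ∈ S
    · have e1 : glue2 att S g h x = (g ⟨x, hx⟩).1 := dif_pos hx
      rw [e1]
      have e2 : glue2 att S g h (g ⟨x, hx⟩).1 = (g (g ⟨x, hx⟩)).1 := dif_pos (g ⟨x, hx⟩).2
      rw [e2, hg.1 ⟨x, hx⟩]
    · have e1 : glue2 att S g h x = (h ⟨x, hx⟩).1 := dif_neg hx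
      rw [e1]
      have e2 : glue2 att S g h (h ⟨x, hx⟩).1 = (h (h ⟨x, hx⟩)).1 := dif_neg (h ⟨x, hx⟩).2
      rw [e2, hh.1 ⟨x, hx⟩]
  · intro x
    by_cases hx : att x ∈ S
    · rw [glue2, dif_pos hx]
      intro hc; exact hg.2 ⟨x, hx⟩ (Subtype.ext hc)
    · rw [glue2, dif_neg hx]
      intro hc; exact hh.2 ⟨x, hx⟩ (Subtype.ext hc)

lemma glue2_good
    {g : {x : H // att x ∈ S} → {x : H // att x ∈ S}}
    {h : {x : H // att x ∉ S} → {x : H // att x ∉ S}} :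
    ∀ x : H, att x ∈ S → att (glue2 att S g h x) ∈ S := by
  intro x hx
  rw [glue2, dif_pos hx]
  exact (g ⟨x, hx⟩).2

noncomputable def goodEquiv :
    ({g : {x : H // att x ∈ S} → {x : H // att x ∈ S} // IsPairing g} ×
     {h : {x : H // att x ∉ S} → {x : H // att x ∉ S} // IsPairing h})
    ≃ {f : {f : H → H // IsPairing f} // ∀ x : H, att x ∈ S → att (f.1 x) ∈ S} := by
  refine Equiv.ofBijective
    (fun p => ⟨⟨glue2 att S p.1.1 p.2.1, glue2_isPairing att S p.1.2 p.2.2⟩,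
      glue2_good att S⟩) ⟨?_, ?_⟩
  · rintro ⟨⟨g, hg⟩, ⟨h, hh⟩⟩ ⟨⟨g', hg'⟩, ⟨h', hh'⟩⟩ heq
    have heq' : glue2 att S g h = glue2 att S g' h' :=
      congrArg Subtype.val (congrArg Subtype.val heq)
    have e1 : g = g' := by
      funext z
      have := congrFun heq' z.1
      rw [glue2, glue2, dif_pos z.2, dif_pos z.2] at this
      exact Subtype.ext this
    have e2 : h = h' := by
      funext z
      have := congrFun heq' z.1
      rw [glue2, glue2, dif_neg z.2, dif_neg z.2] at this
      exact Subtype.ext this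
    subst e1; subst e2; rfl
  · rintro ⟨⟨f, hf⟩, hgood⟩
    have hbad : ∀ x : H, att x ∉ S → att (f x) ∉ S := by
      intro x hx hc
      exact hx (by rw [← hf.1 x]; exact hgood _ hc)
    refine ⟨⟨⟨restrictP f _ hgood, restrictP_isPairing f hf _ hgood⟩,
      ⟨restrictP f _ hbad, restrictP_isPairing f hf _ hbad⟩⟩, ?_⟩
    apply Subtype.ext
    apply Subtype.ext
    funext x
    by_cases hx : att x ∈ S
    · show glue2 att S _ _ x = f x
      rw [glue2, dif_pos hx]; rfl
    · show glue2 att S _ _ x = f x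
      rw [glue2, dif_neg hx]; rfl

end Glue2

/-- Fountoulakis–Reed (Proposition 4.5): in the configuration model on a degree
sequence with `2m` half-edges (attachment map `att : H → V`), for any vertex set
`S` with `deg_H(S)` even, the probability (i.e. the proportion of uniformly
random pairings of the half-edges) that no edge joins `S` to its complement is
at most `binom(m, deg_H(S)/2)⁻¹`. -/
theorem configuration_model_no_boundary_edges
    {V H : Type*} [Fintype V] [Fintype H] (att : H → V) (m : ℕ)
    (hH : Fintype.card H = 2 * m) (S : Finset V)
    (degS : ℕ) (hdeg : degS = (Finset.univ.filter (fun x : H => att x ∈ S)).card)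
    (heven : Even degS) :
    ((Finset.univ.filter (fun f : {f : H → H // IsPairing f} =>
          ∀ x : H, att x ∈ S → att (f.1 x) ∈ S)).card : ℝ)
        / (Fintype.card {f : H → H // IsPairing f})
      ≤ ((m.choose (degS / 2) : ℝ))⁻¹ := by
  obtain ⟨k, hk⟩ := heven
  have hks : degS = 2 * k := by omega
  have hk2 : degS / 2 = k := by omega
  have hA : Nat.card {x : H // att x ∈ S} = 2 * k := by
    rw [Nat.card_eq_fintype_card, Fintype.card_subtype, ← hdeg, hks]
  have hdegle : degS ≤ 2 * m := by
    rw [hdeg, ← hH, ← Finset.card_univ]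
    exact Finset.card_filter_le _ _
  have hkm : k ≤ m := by omega
  have hB : Nat.card {x : H // att x ∉ S} = 2 * (m - k) := by
    rw [Nat.card_eq_fintype_card, Fintype.card_subtype_compl, Fintype.card_subtype, ← hdeg, hH]
    omega
  have hden : Fintype.card {f : H → H // IsPairing f} = pcount m := by
    rw [← Nat.card_eq_fintype_card]
    exact card_pairing m H (by rw [Nat.card_eq_fintype_card, hH])
  have hnum : (Finset.univ.filter (fun f : {f : H → H // IsPairing f} =>
      ∀ x : H, att x ∈ S → att (f.1 x) ∈ S)).card = pcount k * pcount (m - k) := by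
    rw [← Fintype.card_subtype, ← Nat.card_eq_fintype_card,
      ← Nat.card_congr (goodEquiv att S), Nat.card_prod,
      card_pairing k _ hA, card_pairing (m - k) _ hB]
  rw [hnum, hden, hk2]
  have hC : 0 < (m.choose k : ℝ) := by
    exact_mod_cast Nat.choose_pos hkm
  have hpm : 0 < (pcount m : ℝ) := by exact_mod_cast pcount_pos m
  rw [inv_eq_one_div, div_le_div_iff₀ hpm hC, one_mul, mul_comm]
  exact_mod_cast key_nat m k hkm
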